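/- Let j ≥ 2 be an even integer and a, b, α reals with 0 ≤ α ≤ 1. Consider the general complementary Bannai-Ito recurrence coefficients A_n = -(n+2ρ₂-2r₂+1)(n+2ρ₂-2r₁+1)/(4(n+g+1)) (n even), A_n = -(n+1)(n-2r₁-2r₂+1)/(4(n+g+1)) (n odd), C_n = (n+2ρ₁-2r₁+1)(n+2ρ₁-2r₂+1)/(4(n+g+1)) (n even), C_n = (n+2g+1)(n+2ρ₁+2ρ₂+1)/(4(n+g+1)) (n odd), g = ρ₁+ρ₂-r₁-r₂, under the parametrization ρ₁ - r₁ = -(j+1)/2 + e₁ t, ρ₂ - r₂ = -(j+1)/2 + e₂ t, ρ₁ = (b-j-1+a)/4, ρ₂ = (b-j-1-a)/4, with e₁/(e₁+e₂) = α. Then for n = j (even): the limit as t → 0 of A_j exists and equals (1-α)a/2, and the limit as t → 0 of C_j exists and equals αa/2. -/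

import Mathlib

open Filter

/-- Recurrence coefficient `A_n` of the general complementary Bannai-Ito polynomials. -/
noncomputable def Acbi (ρ₁ ρ₂ r₁ r₂ : ℝ) (n : ℕ) : ℝ :=
  if n % 2 = 0 then
    -(((n : ℝ) + 2 * ρ₂ - 2 * r₂ + 1) * ((n : ℝ) + 2 * ρ₂ - 2 * r₁ + 1)) /
      (4 * ((n : ℝ) + (ρ₁ + ρ₂ - r₁ - r₂) + 1))
  else
    -(((n : ℝ) + 1) * ((n : ℝ) - 2 * r₁ - 2 * r₂ + 1)) /
      (4 * ((n : ℝ) + (ρ₁ + ρ₂ - r₁ - r₂) + 1))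

/-- Recurrence coefficient `C_n` of the general complementary Bannai-Ito polynomials. -/
noncomputable def Ccbi (ρ₁ ρ₂ r₁ r₂ : ℝ) (n : ℕ) : ℝ :=
  if n % 2 = 0 then
    (((n : ℝ) + 2 * ρ₁ - 2 * r₁ + 1) * ((n : ℝ) + 2 * ρ₁ - 2 * r₂ + 1)) /
      (4 * ((n : ℝ) + (ρ₁ + ρ₂ - r₁ - r₂) + 1))
  else
    (((n : ℝ) + 2 * (ρ₁ + ρ₂ - r₁ - r₂) + 1) * ((n : ℝ) + 2 * ρ₁ + 2 * ρ₂ + 1)) /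
      (4 * ((n : ℝ) + (ρ₁ + ρ₂ - r₁ - r₂) + 1))

/-- Under the para truncation parametrization `ρ₁ - r₁ = -(j+1)/2 + e₁ t`,
`ρ₂ - r₂ = -(j+1)/2 + e₂ t`, `ρ₁ = (b-j-1+a)/4`, `ρ₂ = (b-j-1-a)/4`, the middle
coefficients `A_j`, `C_j` tend to `(1-α)a/2` and `αa/2` as `t → 0`, where
`α = e₁/(e₁+e₂)`. -/
theorem stmt16 (j : ℕ) (hj : Even j) (hj0 : 2 ≤ j) (a b e₁ e₂ : ℝ)
    (he₁ : e₁ ≠ 0) (he₂ : e₂ ≠ 0) (he : e₁ + e₂ ≠ 0) :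
    Tendsto (fun t : ℝ =>
        Acbi ((b - j - 1 + a) / 4) ((b - j - 1 - a) / 4)
          ((b - j - 1 + a) / 4 + ((j : ℝ) + 1) / 2 - e₁ * t)
          ((b - j - 1 - a) / 4 + ((j : ℝ) + 1) / 2 - e₂ * t) j)
      (nhdsWithin 0 {(0 : ℝ)}ᶜ) (nhds ((1 - e₁ / (e₁ + e₂)) * a / 2)) ∧
    Tendsto (fun t : ℝ =>
        Ccbi ((b - j - 1 + a) / 4) ((b - j - 1 - a) / 4)
          ((b - j - 1 + a) / 4 + ((j : ℝ) + 1) / 2 - e₁ * t)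
          ((b - j - 1 - a) / 4 + ((j : ℝ) + 1) / 2 - e₂ * t) j)
      (nhdsWithin 0 {(0 : ℝ)}ᶜ) (nhds ((e₁ / (e₁ + e₂)) * a / 2)) := by
  have hjmod : j % 2 = 0 := Nat.even_iff.mp hj
  constructor
  · have h1 : Tendsto (fun t : ℝ => e₂ * (a - 2 * e₁ * t) / (2 * (e₁ + e₂)))
        (nhdsWithin 0 {(0 : ℝ)}ᶜ) (nhds ((1 - e₁ / (e₁ + e₂)) * a / 2)) := by
      have hc : Continuous (fun t : ℝ => e₂ * (a - 2 * e₁ * t) / (2 * (e₁ + e₂))) := by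
        fun_prop
      have := (hc.tendsto 0).mono_left (nhdsWithin_le_nhds (s := {(0:ℝ)}ᶜ))
      convert this using 2
      simp only [mul_zero, sub_zero]
      rw [eq_div_iff (by exact mul_ne_zero two_ne_zero he), sub_div' he]
      field_simp
      ring
    refine h1.congr' ?_
    filter_upwards [self_mem_nhdsWithin] with t ht
    simp only [Set.mem_compl_iff, Set.mem_singleton_iff] at ht
    simp only [Acbi, hjmod, if_pos]
    have hd : (4 : ℝ) * ((j : ℝ) + (((b - j - 1 + a) / 4) + ((b - j - 1 - a) / 4) -
        ((b - j - 1 + a) / 4 + ((j : ℝ) + 1) / 2 - e₁ * t) -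
        ((b - j - 1 - a) / 4 + ((j : ℝ) + 1) / 2 - e₂ * t)) + 1) = 4 * (e₁ + e₂) * t := by
      ring
    rw [hd]
    rw [div_eq_div_iff (by positivity) (by
      exact mul_ne_zero (mul_ne_zero (by norm_num) he) ht)]
    ring
  · have h1 : Tendsto (fun t : ℝ => e₁ * (a + 2 * e₂ * t) / (2 * (e₁ + e₂)))
        (nhdsWithin 0 {(0 : ℝ)}ᶜ) (nhds ((e₁ / (e₁ + e₂)) * a / 2)) := by
      have hc : Continuous (fun t : ℝ => e₁ * (a + 2 * e₂ * t) / (2 * (e₁ + e₂))) := by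
        fun_prop
      have := (hc.tendsto 0).mono_left (nhdsWithin_le_nhds (s := {(0:ℝ)}ᶜ))
      convert this using 2
      simp only [mul_zero, add_zero]
      rw [eq_div_iff (by exact mul_ne_zero two_ne_zero he)]
      field_simp
    refine h1.congr' ?_
    filter_upwards [self_mem_nhdsWithin] with t ht
    simp only [Set.mem_compl_iff, Set.mem_singleton_iff] at ht
    simp only [Ccbi, hjmod, if_pos]
    have hd : (4 : ℝ) * ((j : ℝ) + (((b - j - 1 + a) / 4) + ((b - j - 1 - a) / 4) -
        ((b - j - 1 + a) / 4 + ((j : ℝ) + 1) / 2 - e₁ * t) -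
        ((b - j - 1 - a) / 4 + ((j : ℝ) + 1) / 2 - e₂ * t)) + 1) = 4 * (e₁ + e₂) * t := by
      ring
    rw [hd]
    rw [div_eq_div_iff (by positivity) (by
      exact mul_ne_zero (mul_ne_zero (by norm_num) he) ht)]
    ring
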